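/- Let p be a prime and a(x) ∈ ℤ[[x]] with constant coefficient a₀ = p and gcd(p, a₁) = 1, where a₁ is the coefficient of x. Then for every t ≥ 2 there exists a unit u(x) ∈ ℤ[[x]] such that q(x) = u(x)·a(x) satisfies: q₀ = p, q₁ ≡ a₁ (mod p), and the coefficients q₂ = q₃ = ⋯ = q_t = 0. -/

import Mathlib

theorem stmt_4 (p : ℕ) (hp : p.Prime) (a : PowerSeries ℤ)
    (h0 : PowerSeries.coeff 0 a = (p : ℤ))
    (h1 : Int.gcd (p : ℤ) (PowerSeries.coeff 1 a) = 1)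
    (t : ℕ) (ht : 2 ≤ t) :
    ∃ u : PowerSeries ℤ, IsUnit u ∧
      PowerSeries.coeff 0 (u * a) = (p : ℤ) ∧
      PowerSeries.coeff 1 (u * a) ≡ PowerSeries.coeff 1 a [ZMOD (p : ℤ)] ∧
      ∀ i, 2 ≤ i → i ≤ t → PowerSeries.coeff i (u * a) = 0 := by
  have hcop : IsCoprime (p : ℤ) (PowerSeries.coeff 1 a) :=
    Int.isCoprime_iff_gcd_eq_one.mpr h1
  -- general coefficient-of-product formula
  have coeff_mul_range : ∀ (φ ψ : PowerSeries ℤ) (n : ℕ),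
      PowerSeries.coeff n (φ * ψ) =
        ∑ j ∈ Finset.range (n + 1),
          PowerSeries.coeff j φ * PowerSeries.coeff (n - j) ψ := by
    intro φ ψ n
    rw [PowerSeries.coeff_mul]
    exact Finset.Nat.sum_antidiagonal_eq_sum_range_succ
      (fun i j => PowerSeries.coeff i φ * PowerSeries.coeff j ψ) n
  have key : ∀ T : ℕ, ∃ u : PowerSeries ℤ, IsUnit u ∧
      PowerSeries.coeff 0 (u * a) = (p : ℤ) ∧
      PowerSeries.coeff 1 (u * a) ≡ PowerSeries.coeff 1 a [ZMOD (p : ℤ)] ∧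
      ∀ i, 2 ≤ i → i ≤ T → PowerSeries.coeff i (u * a) = 0 := by
    intro T
    induction T with
    | zero =>
      refine ⟨1, isUnit_one, by simpa using h0, by simp [Int.ModEq.refl], ?_⟩
      intro i hi hi'
      omega
    | succ t ih =>
      obtain ⟨u, hu, hq0, hq1, hqz⟩ := ih
      rcases Nat.lt_or_ge t 1 with hlt | hge
      · refine ⟨u, hu, hq0, hq1, ?_⟩
        intro i hi hi'
        omega
      -- t ≥ 1
      set q : PowerSeries ℤ := u * a with hq
      set q1 : ℤ := PowerSeries.coeff 1 q with hq1def
      -- q1 is coprime to p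
      have hq1cop : IsCoprime (p : ℤ) q1 := by
        have hdvd : (p : ℤ) ∣ PowerSeries.coeff 1 a - q1 := Int.ModEq.dvd hq1
        obtain ⟨k, hk⟩ := hdvd
        have : q1 = PowerSeries.coeff 1 a + (p : ℤ) * (-k) := by linarith
        rw [this]
        exact hcop.add_mul_left_right (-k)
      -- Bezout data
      have hcop2 : IsCoprime (p : ℤ) ((-q1) ^ (t - 1) * q1) :=
        (hq1cop.neg_right.pow_right).mul_right hq1cop
      obtain ⟨x, y, hxy⟩ := hcop2
      set qt1 : ℤ := PowerSeries.coeff (t + 1) q with hqt1def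
      set c : ℤ := -qt1 * x with hc
      set b : ℤ := -qt1 * y with hb
      have hbez : c * (p : ℤ) + b * ((-q1) ^ (t - 1) * q1) = -qt1 := by
        have := congrArg (fun z => -qt1 * z) hxy
        simp only [mul_one] at this
        rw [← this]; ring
      -- the correcting unit
      set v : PowerSeries ℤ := PowerSeries.mk (fun i =>
        if i = 0 then 1
        else if i ≤ t then b * (p : ℤ) ^ (t - i) * (-q1) ^ (i - 1)
        else if i = t + 1 then c else 0) with hv
      have hv0 : PowerSeries.coeff 0 v = 1 := by simp [hv]
      have hvj : ∀ j, 1 ≤ j → j ≤ t →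
          PowerSeries.coeff j v = b * (p : ℤ) ^ (t - j) * (-q1) ^ (j - 1) := by
        intro j h1j hjt
        simp only [hv, PowerSeries.coeff_mk]
        rw [if_neg (by omega), if_pos hjt]
      have hvt1 : PowerSeries.coeff (t + 1) v = c := by
        simp only [hv, PowerSeries.coeff_mk]
        rw [if_neg (by omega), if_neg (by omega)]
        simp
      have hvunit : IsUnit v := by
        rw [PowerSeries.isUnit_iff_constantCoeff]
        rw [← PowerSeries.coeff_zero_eq_constantCoeff_apply, hv0]
        exact isUnit_one
      refine ⟨v * u, hvunit.mul hu, ?_, ?_, ?_⟩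
      · -- coefficient 0
        rw [mul_assoc, ← hq, coeff_mul_range]
        simp [hv0, hq0]
      · -- coefficient 1
        rw [mul_assoc, ← hq, coeff_mul_range]
        rw [Finset.sum_range_succ, Finset.sum_range_one]
        rw [hv0, hvj 1 le_rfl hge, hq0]
        simp only [Nat.sub_self, one_mul]
        have : PowerSeries.coeff (1 - 0) q = q1 := by norm_num [hq1def]
        rw [this]
        calc q1 + b * (p:ℤ)^(t-1) * (-q1)^(1-1) * (p:ℤ)
            ≡ q1 + 0 [ZMOD (p : ℤ)] := by
              apply Int.ModEq.add_left
              exact (Int.modEq_zero_iff_dvd).mpr ⟨b * (p:ℤ)^(t-1) * (-q1)^(1-1), by ring⟩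
          _ = q1 := by ring
          _ ≡ PowerSeries.coeff 1 a [ZMOD (p : ℤ)] := hq1
      · -- coefficients 2 .. t+1
        intro i hi2 hit1
        rw [mul_assoc, ← hq, coeff_mul_range]
        rcases Nat.lt_or_ge i (t + 1) with hlt' | hge'
        · -- 2 ≤ i ≤ t
          have hit : i ≤ t := by omega
          obtain ⟨k, rfl⟩ : ∃ k, i = k + 2 := ⟨i - 2, by omega⟩
          rw [show k + 2 + 1 = (k + 1) + 1 + 1 from rfl,
            Finset.sum_range_succ, Finset.sum_range_succ]
          have hzero : ∑ j ∈ Finset.range (k + 1),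
              PowerSeries.coeff j v * PowerSeries.coeff (k + 2 - j) q = 0 := by
            apply Finset.sum_eq_zero
            intro j hj
            rw [Finset.mem_range] at hj
            rw [hqz (k + 2 - j) (by omega) (by omega), mul_zero]
          rw [hzero, zero_add]
          rw [hvj (k + 1) (by omega) (by omega), hvj (k + 2) (by omega) hit]
          have e1 : k + 2 - (k + 1) = 1 := by omega
          have e2 : k + 2 - (k + 2) = 0 := by omega
          rw [e1, e2, ← hq1def, hq0]
          have e3 : t - (k + 1) = (t - (k + 2)) + 1 := by omega
          have e4 : (k + 1) - 1 = k := by omega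
          have e5 : (k + 2) - 1 = k + 1 := by omega
          rw [e3, e4, e5, pow_succ, pow_succ]
          ring
        · -- i = t + 1
          have hieq : i = t + 1 := by omega
          subst hieq
          rw [Finset.sum_range_succ']
          rw [show t + 1 = (t - 1) + 1 + 1 by omega,
            Finset.sum_range_succ, Finset.sum_range_succ]
          have hzero : ∑ j ∈ Finset.range (t - 1),
              PowerSeries.coeff (j + 1) v *
                PowerSeries.coeff (t - 1 + 1 + 1 - (j + 1)) q = 0 := by
            apply Finset.sum_eq_zero
            intro j hj
            rw [Finset.mem_range] at hj
            rw [hqz (t - 1 + 1 + 1 - (j + 1)) (by omega) (by omega), mul_zero]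
          rw [hzero, zero_add]
          have e0 : t - 1 + 1 + 1 - 0 = t + 1 := by omega
          have e1 : t - 1 + 1 + 1 - (t - 1 + 1) = 1 := by omega
          have e2 : t - 1 + 1 + 1 - (t - 1 + 1 + 1) = 0 := by omega
          have e3 : t - 1 + 1 = t := by omega
          have e4 : t - 1 + 1 + 1 = t + 1 := by omega
          rw [e0, e1, e2, e4, e3, hv0, hvj t hge le_rfl, hvt1, hq0, ← hq1def, ← hqt1def]
          have e5 : t - t = 0 := by omega
          rw [e5, pow_zero]
          have : b * 1 * (-q1) ^ (t - 1) * q1 + c * (p : ℤ) = -qt1 := by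
            rw [← hbez]; ring
          linarith
  obtain ⟨u, hu, h0', h1', hz⟩ := key t
  exact ⟨u, hu, h0', h1', hz⟩
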